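/- Let K be a field and F = {f_1,...,f_s} ⊂ (K[x_1])[x_2,...,x_n] polynomials none of which lies in K[x_1], all with the same leading monomial x̃^α, and suppose lm(f_1 + ... + f_s) ≺ x̃^α. Let p ∈ K[x_1] be irreducible. Then after a permutation of the indices of F, the multiplier b = lcm_{1≤j<s}(lcm(lc(f_j),lc(f_s))/lc(f_j)) is not divisible by p. In particular, the permutation placing in the last position an f_j whose leading coefficient has minimal p-adic valuation achieves this. -/

import Mathlib

open MvPolynomial

/-- The leading monomial (exponent) of `f` with respect to the monomial order `m`,
taken over the coefficient ring. -/
noncomputable def mdeg {σ : Type*} (m : MonomialOrder σ) {R : Type*} [CommSemiring R]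
    (f : MvPolynomial σ R) : σ →₀ ℕ :=
  m.toSyn.symm (f.support.sup fun d => m.toSyn d)

/-- The leading coefficient of `f` with respect to the monomial order `m`. -/
noncomputable def lC {σ : Type*} (m : MonomialOrder σ) {R : Type*} [CommSemiring R]
    (f : MvPolynomial σ R) : R :=
  f.coeff (mdeg m f)

/-- The leading term of `f` with respect to the monomial order `m`. -/
noncomputable def lT {σ : Type*} (m : MonomialOrder σ) {R : Type*} [CommSemiring R]
    (f : MvPolynomial σ R) : MvPolynomial σ R :=
  monomial (mdeg m f) (lC m f)

/-- `d` is a greatest common divisor of `a` and `b` (gcd's are unique up to units). -/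
def IsGcd {α : Type*} [CommMonoid α] (d a b : α) : Prop :=
  d ∣ a ∧ d ∣ b ∧ ∀ e, e ∣ a → e ∣ b → e ∣ d

/-- `l` is a least common multiple of `a` and `b` (lcm's are unique up to units). -/
def IsLcm {α : Type*} [CommMonoid α] (l a b : α) : Prop :=
  a ∣ l ∧ b ∣ l ∧ ∀ e, a ∣ e → b ∣ e → l ∣ e

/-- **Avoiding an irreducible `p` in the syzygy multiplier.**  In the setting of the
syzygy lemma, for any irreducible `p ∈ K[x₁]` the indices can be permuted so that the
multiplier `b = lcm_{j<s+1}(lcm(lc f_j, lc f_{s+1})/lc f_j)` is not divisible by `p`;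
the permutation placing in the last position an `f_j` whose leading coefficient has
minimal `p`-adic valuation achieves this. -/
theorem syzygy_multiplier_avoids_p {σ K : Type*} [Field K] (m : MonomialOrder σ) (s : ℕ)
    (f : Fin (s + 1) → MvPolynomial σ (Polynomial K))
    (hfR : ∀ j, f j ∉ Set.range (C : Polynomial K → MvPolynomial σ (Polynomial K)))
    (α : σ →₀ ℕ) (hα : ∀ j, mdeg m (f j) = α)
    (hlt : m.toSyn (mdeg m (∑ j, f j)) < m.toSyn α)
    (p : Polynomial K) (hp : Irreducible p) :
    ∃ π : Equiv.Perm (Fin (s + 1)),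
      (∀ j n, p ^ n ∣ lC m (f (π (Fin.last s))) → p ^ n ∣ lC m (f (π j))) ∧
      ∀ (M u v : Fin s → Polynomial K) (b : Polynomial K),
        (∀ j, IsLcm (M j) (lC m (f (π j.castSucc))) (lC m (f (π (Fin.last s))))) →
        (∀ j, M j = lC m (f (π j.castSucc)) * u j) →
        (∀ j, M j = lC m (f (π (Fin.last s))) * v j) →
        (∀ j, u j ∣ b) → (∀ e, (∀ j, u j ∣ e) → b ∣ e) →
        ¬ p ∣ b := by
  classical
  set c : Fin (s + 1) → Polynomial K := fun j => lC m (f j) with hcdef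
  have hc0 : ∀ j, c j ≠ 0 := by
    intro j
    have hne : f j ≠ 0 := fun h => hfR j ⟨0, by simp [h]⟩
    have hsupp : (f j).support.Nonempty := by
      rwa [Finset.nonempty_iff_ne_empty, Ne, MvPolynomial.support_eq_empty]
    obtain ⟨d, hd, hdeq⟩ := Finset.exists_mem_eq_sup (f j).support hsupp
      (fun d => m.toSyn d)
    have hmd : mdeg m (f j) = d := by
      rw [mdeg, hdeq]; exact m.toSyn.symm_apply_apply d
    simpa [c, lC, hmd] using (MvPolynomial.mem_support_iff.mp hd)
  have hfin : ∀ j, FiniteMultiplicity p (c j) := fun j =>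
    FiniteMultiplicity.of_prime_left hp.prime (hc0 j)
  obtain ⟨j₀, -, hj₀⟩ := Finset.exists_min_image Finset.univ
    (fun j => multiplicity p (c j)) ⟨Fin.last s, Finset.mem_univ _⟩
  set π : Equiv.Perm (Fin (s + 1)) := Equiv.swap j₀ (Fin.last s) with hπ
  have hπlast : π (Fin.last s) = j₀ := Equiv.swap_apply_right _ _
  have hmono : ∀ (j : Fin (s + 1)) (n : ℕ), p ^ n ∣ c j₀ → p ^ n ∣ c j := by
    intro j n hn
    have h1 : n ≤ multiplicity p (c j₀) := (hfin j₀).le_multiplicity_of_pow_dvd hn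
    exact (hfin j).pow_dvd_iff_le_multiplicity.mpr
      (h1.trans (hj₀ j (Finset.mem_univ _)))
  refine ⟨π, fun j n hn => hmono (π j) n (hπlast ▸ hn), ?_⟩
  intro M u v b hM hu hv hub hlcm hpb
  -- write c j₀ = p ^ k * t with p ∤ t
  set k := multiplicity p (c j₀) with hk
  obtain ⟨t, ht⟩ := pow_multiplicity_dvd p (c j₀)
  have hpt : ¬ p ∣ t := by
    intro hdvd
    obtain ⟨w, hw⟩ := hdvd
    have : p ^ (k + 1) ∣ c j₀ :=
      ⟨w, by rw [ht, hw]; ring⟩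
    exact (hfin j₀).not_pow_dvd_of_multiplicity_lt (Nat.lt_succ_self _) this
  have hpu : ∀ j : Fin s, ¬ p ∣ u j := by
    intro j hdvd
    obtain ⟨w, hw⟩ := hmono (π j.castSucc) k (hk ▸ pow_multiplicity_dvd p _)
    have hce : c (π (Fin.last s)) ∣ c (π j.castSucc) * t := by
      rw [hπlast, ht, hw]; exact ⟨w, by ring⟩
    have hMe : M j ∣ c (π j.castSucc) * t := (hM j).2.2 _ (Dvd.intro _ rfl) hce
    rw [hu j] at hMe
    have hut : u j ∣ t := (mul_dvd_mul_iff_left (hc0 (π j.castSucc))).mp hMe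
    exact hpt (hdvd.trans hut)
  have hbprod : b ∣ ∏ j, u j :=
    hlcm _ (fun j => Finset.dvd_prod_of_mem u (Finset.mem_univ j))
  obtain ⟨j, -, hj⟩ := hp.prime.exists_mem_finset_dvd (hpb.trans hbprod)
  exact hpu j hj
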